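/- For all real h and finite r, Owen's T function satisfies T(h,r) = (r/(2π(1+r²))) Σ_{k=0}^∞ ((2k)!!/(2k+1)!!) Q(k+1, q) (r²/(1+r²))^k, where q = (1+r²)h²/2. -/

import Mathlib

open Real MeasureTheory Filter Topology Set

set_option maxHeartbeats 1000000

/-- Owen's T function. -/
noncomputable def OwenT (h r : ℝ) : ℝ :=
  (1 / (2 * Real.pi)) * ∫ x in (0:ℝ)..r, Real.exp (-h ^ 2 * (1 + x ^ 2) / 2) / (1 + x ^ 2)

/-- Upper regularized incomplete gamma function Q(a,x) = Γ(a,x)/Γ(a). -/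
noncomputable def regGammaQ (a x : ℝ) : ℝ :=
  (∫ t in Set.Ioi x, t ^ (a - 1) * Real.exp (-t)) / Real.Gamma a

/-- (2k)!! = 2^k k! -/
noncomputable def evenDF (k : ℕ) : ℝ := 2 ^ k * k.factorial

/-- (2k+1)!! = (2k+1)!/(2^k k!) -/
noncomputable def oddDF (k : ℕ) : ℝ := (2 * k + 1).factorial / (2 ^ k * k.factorial)

namespace OwenAux

noncomputable def A (k : ℕ) : ℝ := 4 ^ k * k.factorial / (2 * k + 1).factorial
noncomputable def B (k : ℕ) : ℝ := 4 ^ k * k.factorial / (2 * k).factorial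

lemma A_nonneg (k : ℕ) : 0 ≤ A k := by
  unfold A; positivity

lemma B_nonneg (k : ℕ) : 0 ≤ B k := by
  unfold B; positivity

lemma B_eq (k : ℕ) : B k = A k * (2 * k + 1) := by
  unfold A B
  rw [show (2 * k + 1).factorial = (2 * k + 1) * (2 * k).factorial from Nat.factorial_succ _]
  have h1 : (0:ℝ) < (2 * k).factorial := by exact_mod_cast (2 * k).factorial_pos
  have h2 : (0:ℝ) < (2 * (k:ℝ) + 1) := by positivity
  push_cast
  field_simp

lemma B_succ (k : ℕ) : B (k + 1) = 2 * A k := by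
  unfold A B
  rw [show 2 * (k + 1) = (2 * k + 1) + 1 by ring, Nat.factorial_succ (2 * k + 1),
    Nat.factorial_succ k]
  have h1 : (0:ℝ) < (2 * k + 1).factorial := by exact_mod_cast (2 * k + 1).factorial_pos
  push_cast
  field_simp
  ring

lemma B_zero : B 0 = 1 := by simp [B]

lemma hasDerivAt_u (s : ℝ) (k : ℕ) (x : ℝ) :
    HasDerivAt (fun y : ℝ => A k * s ^ k * y ^ (2 * k + 1) * Real.exp (-s * y ^ 2))
      (B k * s ^ k * x ^ (2 * k) * Real.exp (-s * x ^ 2)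
        - B (k + 1) * s ^ (k + 1) * x ^ (2 * (k + 1)) * Real.exp (-s * x ^ 2)) x := by
  have h1 : HasDerivAt (fun y : ℝ => -s * y ^ 2) (-s * (2 * x ^ 1)) x :=
    (hasDerivAt_pow 2 x).const_mul (-s)
  have h2 := h1.exp
  have h3 := ((hasDerivAt_pow (2 * k + 1) x).mul h2).const_mul (A k * s ^ k)
  have heq : (fun y : ℝ => A k * s ^ k * y ^ (2 * k + 1) * Real.exp (-s * y ^ 2))
      = fun y : ℝ => A k * s ^ k * (y ^ (2 * k + 1) * Real.exp (-s * y ^ 2)) := by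
    funext y; ring
  rw [heq]
  refine h3.congr_deriv ?_
  rw [B_eq, B_succ]
  have : 2 * k + 1 - 1 = 2 * k := by omega
  rw [this]
  push_cast
  ring

lemma partial_sum (s r : ℝ) (N : ℕ) :
    ∑ k ∈ Finset.range N, A k * s ^ k * r ^ (2 * k + 1) * Real.exp (-s * r ^ 2)
      = (∫ x in (0:ℝ)..r, Real.exp (-s * x ^ 2))
        - ∫ x in (0:ℝ)..r, B N * s ^ N * x ^ (2 * N) * Real.exp (-s * x ^ 2) := by
  have hF : ∀ x ∈ Set.uIcc (0:ℝ) r, HasDerivAt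
      (fun y => ∑ k ∈ Finset.range N, A k * s ^ k * y ^ (2 * k + 1) * Real.exp (-s * y ^ 2))
      (Real.exp (-s * x ^ 2) - B N * s ^ N * x ^ (2 * N) * Real.exp (-s * x ^ 2)) x := by
    intro x _
    have h := HasDerivAt.fun_sum (fun k (_ : k ∈ Finset.range N) => hasDerivAt_u s k x)
    rw [Finset.sum_range_sub' (fun k => B k * s ^ k * x ^ (2 * k) * Real.exp (-s * x ^ 2))] at h
    simpa [B_zero] using h
  have hcont : Continuous (fun x : ℝ =>
      Real.exp (-s * x ^ 2) - B N * s ^ N * x ^ (2 * N) * Real.exp (-s * x ^ 2)) := by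
    continuity
  have key := intervalIntegral.integral_eq_sub_of_hasDerivAt hF
    (hcont.intervalIntegrable 0 r)
  rw [intervalIntegral.integral_sub ((by continuity : Continuous fun x : ℝ =>
      Real.exp (-s * x ^ 2)).intervalIntegrable 0 r)
      ((by continuity : Continuous fun x : ℝ =>
      B N * s ^ N * x ^ (2 * N) * Real.exp (-s * x ^ 2)).intervalIntegrable 0 r)] at key
  rw [key]
  simp

lemma central (N : ℕ) : 2 ^ N * (N.factorial * N.factorial) ≤ (2 * N).factorial := by
  induction N with
  | zero => simp
  | succ n ih =>
    have h : 2 * (n + 1) = (2 * n + 1) + 1 := by ring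
    rw [h, Nat.factorial_succ (2 * n + 1), Nat.factorial_succ (2 * n), Nat.factorial_succ n]
    calc 2 ^ (n + 1) * ((n + 1) * n.factorial * ((n + 1) * n.factorial))
        = (2 * (n + 1)) * ((n + 1) * (2 ^ n * (n.factorial * n.factorial))) := by ring
      _ ≤ (2 * (n + 1)) * ((2 * n + 1) * (2 ^ n * (n.factorial * n.factorial))) := by
          have : n + 1 ≤ 2 * n + 1 := by omega
          exact Nat.mul_le_mul_left _ (Nat.mul_le_mul_right _ this)
      _ ≤ (2 * (n + 1)) * ((2 * n + 1) * (2 * n).factorial) := by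
          exact Nat.mul_le_mul_left _ (Nat.mul_le_mul_left _ ih)
      _ = (2 * n + 1 + 1) * ((2 * n + 1) * (2 * n).factorial) := by ring

lemma B_le (N : ℕ) : B N ≤ 2 ^ N / N.factorial := by
  have h1 : (0:ℝ) < N.factorial := by exact_mod_cast N.factorial_pos
  have h2 : (2:ℝ) ^ N * (N.factorial * N.factorial) ≤ (2 * N).factorial := by
    exact_mod_cast central N
  have h3 : (0:ℝ) < 2 ^ N * (N.factorial * N.factorial) := by positivity
  have := div_le_div_of_nonneg_left (by positivity : (0:ℝ) ≤ 4 ^ N * N.factorial) h3 h2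
  calc B N ≤ 4 ^ N * N.factorial / (2 ^ N * (N.factorial * N.factorial)) := this
    _ = 2 ^ N / N.factorial := by
        have h4 : (4:ℝ) ^ N = 2 ^ N * 2 ^ N := by
          rw [← mul_pow]; norm_num
        rw [h4]
        field_simp

lemma hasSum_gauss (s r : ℝ) (hs : 0 ≤ s) (hr : 0 ≤ r) :
    HasSum (fun k => A k * s ^ k * r ^ (2 * k + 1) * Real.exp (-s * r ^ 2))
      (∫ x in (0:ℝ)..r, Real.exp (-s * x ^ 2)) := by
  have hnn : ∀ k, 0 ≤ A k * s ^ k * r ^ (2 * k + 1) * Real.exp (-s * r ^ 2) := by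
    intro k
    have := A_nonneg k
    positivity
  rw [hasSum_iff_tendsto_nat_of_nonneg hnn]
  have hJ : Tendsto (fun N => ∫ x in (0:ℝ)..r, B N * s ^ N * x ^ (2 * N) * Real.exp (-s * x ^ 2))
      atTop (𝓝 0) := by
    have hb : ∀ N : ℕ, ‖∫ x in (0:ℝ)..r, B N * s ^ N * x ^ (2 * N) * Real.exp (-s * x ^ 2)‖
        ≤ r * ((2 * (s * r ^ 2)) ^ N / N.factorial) := by
      intro N
      have hC : ∀ x ∈ Set.uIoc (0:ℝ) r, ‖B N * s ^ N * x ^ (2 * N) * Real.exp (-s * x ^ 2)‖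
          ≤ B N * s ^ N * r ^ (2 * N) := by
        intro x hx
        rw [Set.uIoc_of_le hr] at hx
        have hx0 : 0 < x := hx.1
        have hxr : x ≤ r := hx.2
        have he : Real.exp (-s * x ^ 2) ≤ 1 := by
          apply Real.exp_le_one_iff.mpr
          nlinarith
        have hxp : x ^ (2 * N) ≤ r ^ (2 * N) := pow_le_pow_left₀ hx0.le hxr _
        have hBn := B_nonneg N
        rw [Real.norm_eq_abs, abs_of_nonneg (by positivity)]
        calc B N * s ^ N * x ^ (2 * N) * Real.exp (-s * x ^ 2)
            ≤ B N * s ^ N * x ^ (2 * N) * 1 := by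
              apply mul_le_mul_of_nonneg_left he (by positivity)
          _ = B N * s ^ N * x ^ (2 * N) := by ring
          _ ≤ B N * s ^ N * r ^ (2 * N) := by
              apply mul_le_mul_of_nonneg_left hxp (by positivity)
      have h1 := intervalIntegral.norm_integral_le_of_norm_le_const hC
      simp only [sub_zero, abs_of_nonneg hr] at h1
      refine h1.trans ?_
      have h2 : B N * s ^ N * r ^ (2 * N) ≤ (2 * (s * r ^ 2)) ^ N / N.factorial := by
        have h3 : B N * s ^ N * r ^ (2 * N) ≤ (2 ^ N / N.factorial) * s ^ N * r ^ (2 * N) := by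
          apply mul_le_mul_of_nonneg_right (mul_le_mul_of_nonneg_right (B_le N) (by positivity))
            (by positivity)
        refine h3.trans (le_of_eq ?_)
        rw [mul_pow, mul_pow, pow_mul]
        ring
      calc B N * s ^ N * r ^ (2 * N) * r ≤ (2 * (s * r ^ 2)) ^ N / N.factorial * r :=
            mul_le_mul_of_nonneg_right h2 hr
        _ = r * ((2 * (s * r ^ 2)) ^ N / N.factorial) := mul_comm _ _
    have hlim : Tendsto (fun N : ℕ => r * ((2 * (s * r ^ 2)) ^ N / N.factorial)) atTop (𝓝 0) := by
      have := FloorSemiring.tendsto_pow_div_factorial_atTop (K := ℝ) (2 * (s * r ^ 2))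
      simpa using (this.const_mul r)
    exact squeeze_zero_norm hb hlim
  have := (tendsto_const_nhds (x := ∫ x in (0:ℝ)..r, Real.exp (-s * x ^ 2))
    (f := atTop (α := ℕ))).sub hJ
  simp only [sub_zero] at this
  exact Tendsto.congr (fun N => (partial_sum s r N).symm) this

lemma ratio_eq (k : ℕ) : evenDF k / oddDF k = A k * k.factorial := by
  unfold evenDF oddDF A
  have h1 : (0:ℝ) < k.factorial := by exact_mod_cast k.factorial_pos
  have h2 : (0:ℝ) < (2 * k + 1).factorial := by exact_mod_cast (2 * k + 1).factorial_pos
  have h4 : (4:ℝ) ^ k = 2 ^ k * 2 ^ k := by rw [← mul_pow]; norm_num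
  rw [h4]
  field_simp

lemma regGammaQ_eq (k : ℕ) (q : ℝ) :
    regGammaQ (k + 1) q = (∫ t in Set.Ioi q, t ^ k * Real.exp (-t)) / k.factorial := by
  unfold regGammaQ
  rw [Real.Gamma_nat_eq_factorial]
  congr 1
  refine setIntegral_congr_fun measurableSet_Ioi (fun t _ => ?_)
  rw [show (k:ℝ) + 1 - 1 = (k:ℝ) by ring, Real.rpow_natCast]

lemma term_eq (h r : ℝ) (k : ℕ) :
    (r / (2 * Real.pi * (1 + r ^ 2))) *
        ((evenDF k / oddDF k) * regGammaQ (k + 1) ((1 + r ^ 2) * h ^ 2 / 2) *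
          (r ^ 2 / (1 + r ^ 2)) ^ k)
      = ∫ s in Set.Ioi (h ^ 2 / 2),
          (1 / (2 * Real.pi)) * Real.exp (-s) *
            (A k * s ^ k * r ^ (2 * k + 1) * Real.exp (-s * r ^ 2)) := by
  have hb : (0:ℝ) < 1 + r ^ 2 := by positivity
  set a := h ^ 2 / 2 with ha
  have hq : (1 + r ^ 2) * h ^ 2 / 2 = (1 + r ^ 2) * a := by rw [ha]; ring
  have hsub := integral_comp_mul_left_Ioi (fun t => t ^ k * Real.exp (-t)) a hb
  simp only [smul_eq_mul] at hsub
  have hleft : ∫ s in Set.Ioi a, ((1 + r ^ 2) * s) ^ k * Real.exp (-((1 + r ^ 2) * s))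
      = (1 + r ^ 2) ^ k * ∫ s in Set.Ioi a, s ^ k * Real.exp (-((1 + r ^ 2) * s)) := by
    rw [← integral_const_mul]
    refine setIntegral_congr_fun measurableSet_Ioi (fun s _ => ?_)
    rw [mul_pow]; ring
  have hIoi : (∫ t in Set.Ioi ((1 + r ^ 2) * a), t ^ k * Real.exp (-t))
      = (1 + r ^ 2) ^ (k + 1) * ∫ s in Set.Ioi a, s ^ k * Real.exp (-((1 + r ^ 2) * s)) := by
    rw [hleft] at hsub
    have := hsub.symm
    rw [inv_mul_eq_iff_eq_mul₀ hb.ne'] at this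
    rw [this]
    ring
  have hrhs : (∫ s in Set.Ioi a,
        (1 / (2 * Real.pi)) * Real.exp (-s) *
          (A k * s ^ k * r ^ (2 * k + 1) * Real.exp (-s * r ^ 2)))
      = (1 / (2 * Real.pi)) * A k * r ^ (2 * k + 1) *
          ∫ s in Set.Ioi a, s ^ k * Real.exp (-((1 + r ^ 2) * s)) := by
    rw [← integral_const_mul]
    refine setIntegral_congr_fun measurableSet_Ioi (fun s _ => ?_)
    rw [show -((1 + r ^ 2) * s) = -s + -s * r ^ 2 by ring, Real.exp_add]
    ring
  rw [hrhs, ratio_eq, regGammaQ_eq, hq, hIoi]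
  have hfac : (0:ℝ) < k.factorial := by exact_mod_cast k.factorial_pos
  have hpi : (0:ℝ) < Real.pi := Real.pi_pos
  rw [div_pow]
  field_simp
  ring

lemma g_cont (r : ℝ) (k : ℕ) :
    Continuous (fun s : ℝ => (1 / (2 * Real.pi)) * Real.exp (-s) *
      (A k * s ^ k * r ^ (2 * k + 1) * Real.exp (-s * r ^ 2))) := by
  continuity

lemma main_pos (h r : ℝ) (hr : 0 < r) :
    OwenT h r =
      (r / (2 * Real.pi * (1 + r ^ 2))) *
        ∑' k : ℕ, (evenDF k / oddDF k) *
          regGammaQ (k + 1) ((1 + r ^ 2) * h ^ 2 / 2) * (r ^ 2 / (1 + r ^ 2)) ^ k := by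
  have hpi : (0:ℝ) < Real.pi := Real.pi_pos
  set a := h ^ 2 / 2 with ha
  have ha0 : 0 ≤ a := by rw [ha]; positivity
  set g : ℕ → ℝ → ℝ := fun k s => (1 / (2 * Real.pi)) * Real.exp (-s) *
      (A k * s ^ k * r ^ (2 * k + 1) * Real.exp (-s * r ^ 2)) with hg
  -- pointwise sum of g over Ioi a
  have hpt : ∀ s : ℝ, s ∈ Set.Ioi a → (∑' k, g k s) = (1 / (2 * Real.pi)) *
      (Real.exp (-s) * ∫ x in (0:ℝ)..r, Real.exp (-s * x ^ 2)) := by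
    intro s hs
    have hs0 : 0 ≤ s := le_trans ha0 (le_of_lt hs)
    have hS := hasSum_gauss s r hs0 hr.le
    have : (fun k => g k s) = fun k =>
        ((1 / (2 * Real.pi)) * Real.exp (-s)) *
          (A k * s ^ k * r ^ (2 * k + 1) * Real.exp (-s * r ^ 2)) := by
      funext k; rw [hg]
    rw [this, tsum_mul_left, hS.tsum_eq, mul_assoc]
  -- summability over Ioi a with the bound r * exp(-s) / (2π)
  have hbound : ∀ s : ℝ, s ∈ Set.Ioi a → (∑' k, (‖g k s‖₊ : ENNReal))
      ≤ ENNReal.ofReal ((1 / (2 * Real.pi)) * (Real.exp (-s) * r)) := by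
    intro s hs
    have hs0 : 0 ≤ s := le_trans ha0 (le_of_lt hs)
    have hS := hasSum_gauss s r hs0 hr.le
    have hnn : ∀ k, 0 ≤ g k s := by
      intro k
      have := A_nonneg k
      rw [hg]
      positivity
    have hsummable : Summable (fun k => g k s) := by
      have : (fun k => g k s) = fun k =>
          ((1 / (2 * Real.pi)) * Real.exp (-s)) *
            (A k * s ^ k * r ^ (2 * k + 1) * Real.exp (-s * r ^ 2)) := by
        funext k; rw [hg]
      rw [this]
      exact hS.summable.mul_left _
    have h1 : (∑' k, (‖g k s‖₊ : ENNReal)) = ENNReal.ofReal (∑' k, g k s) := by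
      rw [ENNReal.ofReal_tsum_of_nonneg hnn hsummable]
      congr 1
      funext k
      rw [← Real.enorm_eq_ofReal (hnn k)]
      rfl
    rw [h1, hpt s hs]
    apply ENNReal.ofReal_le_ofReal
    have hle : (∫ x in (0:ℝ)..r, Real.exp (-s * x ^ 2)) ≤ r := by
      have hb : ∀ x ∈ Set.uIoc (0:ℝ) r, ‖Real.exp (-s * x ^ 2)‖ ≤ 1 := by
        intro x _
        rw [Real.norm_eq_abs, abs_of_pos (Real.exp_pos _)]
        apply Real.exp_le_one_iff.mpr
        nlinarith
      have := intervalIntegral.norm_integral_le_of_norm_le_const hb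
      simp only [sub_zero, abs_of_nonneg hr.le, mul_one, one_mul] at this
      calc (∫ x in (0:ℝ)..r, Real.exp (-s * x ^ 2))
          ≤ ‖∫ x in (0:ℝ)..r, Real.exp (-s * x ^ 2)‖ := le_norm_self _
        _ ≤ r := this
    have h2 : 0 ≤ Real.exp (-s) := (Real.exp_pos _).le
    have h3 : 0 ≤ 1 / (2 * Real.pi) := by positivity
    apply mul_le_mul_of_nonneg_left _ h3
    exact mul_le_mul_of_nonneg_left hle h2
  -- the dominating function is integrable on Ioi a
  have hdom : IntegrableOn (fun s : ℝ => (1 / (2 * Real.pi)) * (Real.exp (-s) * r))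
      (Set.Ioi a) := by
    have h0 := exp_neg_integrableOn_Ioi a one_pos
    simp only [neg_one_mul] at h0
    exact ((h0.mul_const r).const_mul _)
  -- swap tsum and integral
  have hswap : (∑' k, ∫ s in Set.Ioi a, g k s) = ∫ s in Set.Ioi a, ∑' k, g k s := by
    refine (integral_tsum (fun k => ((g_cont r k).aestronglyMeasurable)) ?_).symm
    rw [← lintegral_tsum (fun k => ((g_cont r k).measurable.enorm).aemeasurable)]
    have hle : (∫⁻ s in Set.Ioi a, ∑' k, (‖g k s‖₊ : ENNReal))
        ≤ ∫⁻ s in Set.Ioi a, ENNReal.ofReal ((1 / (2 * Real.pi)) * (Real.exp (-s) * r)) := by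
      refine lintegral_mono_ae ?_
      filter_upwards [ae_restrict_mem measurableSet_Ioi] with s hs
      exact hbound s hs
    refine ne_of_lt (lt_of_le_of_lt hle ?_)
    have h2 : (∫⁻ s in Set.Ioi a, ENNReal.ofReal ((1 / (2 * Real.pi)) * (Real.exp (-s) * r)))
        ≤ ∫⁻ s in Set.Ioi a, (‖(1 / (2 * Real.pi)) * (Real.exp (-s) * r)‖₊ : ENNReal) := by
      refine lintegral_mono (fun s => ?_)
      exact Real.ofReal_le_enorm _
    exact lt_of_le_of_lt h2 hdom.2
  -- value of the inner integral: Fubini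
  have hfub : (∫ s in Set.Ioi a, Real.exp (-s) * ∫ x in (0:ℝ)..r, Real.exp (-s * x ^ 2))
      = ∫ x in (0:ℝ)..r, Real.exp (-h ^ 2 * (1 + x ^ 2) / 2) / (1 + x ^ 2) := by
    have hconv : ∀ s : ℝ, Real.exp (-s) * (∫ x in (0:ℝ)..r, Real.exp (-s * x ^ 2))
        = ∫ x in Set.Ioc (0:ℝ) r, Real.exp (-((1 + x ^ 2) * s)) := by
      intro s
      rw [← intervalIntegral.integral_const_mul,
        intervalIntegral.integral_of_le hr.le]
      refine setIntegral_congr_fun measurableSet_Ioc (fun x _ => ?_)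
      rw [show -((1 + x ^ 2) * s) = -s + -s * x ^ 2 by ring, Real.exp_add]
    have hF : Integrable (Function.uncurry fun (s x : ℝ) => Real.exp (-((1 + x ^ 2) * s)))
        ((volume.restrict (Set.Ioi a)).prod (volume.restrict (Set.Ioc 0 r))) := by
      have hFc : Continuous (Function.uncurry fun (s x : ℝ) => Real.exp (-((1 + x ^ 2) * s))) := by
        apply Real.continuous_exp.comp
        apply Continuous.neg
        exact ((continuous_const.add ((continuous_snd).pow 2)).mul continuous_fst)
      rw [integrable_prod_iff hFc.aestronglyMeasurable]
      constructor
      · filter_upwards with s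
        exact (Continuous.integrableOn_Ioc (by continuity))
      · have hmeas := hFc.aestronglyMeasurable.norm.integral_prod_right'
          (μ := volume.restrict (Set.Ioi a)) (ν := volume.restrict (Set.Ioc 0 r))
        refine Integrable.mono' (hdom.const_mul (2 * Real.pi)) hmeas ?_
        filter_upwards [ae_restrict_mem measurableSet_Ioi] with s hs
        have hs0 : 0 ≤ s := le_trans ha0 (le_of_lt hs)
        have h1 : ∀ x ∈ Set.Ioc (0:ℝ) r, ‖‖Real.exp (-((1 + x ^ 2) * s))‖‖ ≤ Real.exp (-s) := by
          intro x _
          rw [norm_norm, Real.norm_eq_abs, abs_of_pos (Real.exp_pos _)]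
          apply Real.exp_le_exp.mpr
          nlinarith
        have h2 : volume (Set.Ioc (0:ℝ) r) < ⊤ := by
          rw [Real.volume_Ioc]
          exact ENNReal.ofReal_lt_top
        have h3 := norm_setIntegral_le_of_norm_le_const_ae' h2
          (Filter.Eventually.of_forall h1)
        rw [measureReal_def, Real.volume_Ioc, ENNReal.toReal_ofReal (by linarith), sub_zero] at h3
        calc ‖∫ x in Set.Ioc (0:ℝ) r, ‖Real.exp (-((1 + x ^ 2) * s))‖‖
            ≤ Real.exp (-s) * r := h3
          _ = (2 * Real.pi) * ((1 / (2 * Real.pi)) * (Real.exp (-s) * r)) := by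
              field_simp
    have hswap2 := integral_integral_swap hF
    have hinner : ∀ x : ℝ, (∫ s in Set.Ioi a, Real.exp (-((1 + x ^ 2) * s)))
        = Real.exp (-h ^ 2 * (1 + x ^ 2) / 2) / (1 + x ^ 2) := by
      intro x
      have hbx : (0:ℝ) < 1 + x ^ 2 := by positivity
      have := integral_comp_mul_left_Ioi (fun t => Real.exp (-t)) a hbx
      simp only [smul_eq_mul] at this
      rw [this, integral_exp_neg_Ioi]
      rw [ha]
      field_simp
    calc (∫ s in Set.Ioi a, Real.exp (-s) * ∫ x in (0:ℝ)..r, Real.exp (-s * x ^ 2))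
        = ∫ s in Set.Ioi a, ∫ x in Set.Ioc (0:ℝ) r, Real.exp (-((1 + x ^ 2) * s)) := by
          refine setIntegral_congr_fun measurableSet_Ioi (fun s _ => hconv s)
      _ = ∫ x in Set.Ioc (0:ℝ) r, ∫ s in Set.Ioi a, Real.exp (-((1 + x ^ 2) * s)) := hswap2
      _ = ∫ x in Set.Ioc (0:ℝ) r, Real.exp (-h ^ 2 * (1 + x ^ 2) / 2) / (1 + x ^ 2) := by
          refine setIntegral_congr_fun measurableSet_Ioc (fun x _ => hinner x)
      _ = ∫ x in (0:ℝ)..r, Real.exp (-h ^ 2 * (1 + x ^ 2) / 2) / (1 + x ^ 2) := by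
          rw [intervalIntegral.integral_of_le hr.le]
  -- put everything together
  rw [mul_comm (r / (2 * Real.pi * (1 + r ^ 2)))]
  rw [← tsum_mul_right]
  have hterm : ∀ k : ℕ, ((evenDF k / oddDF k) *
      regGammaQ (k + 1) ((1 + r ^ 2) * h ^ 2 / 2) * (r ^ 2 / (1 + r ^ 2)) ^ k) *
        (r / (2 * Real.pi * (1 + r ^ 2))) = ∫ s in Set.Ioi a, g k s := by
    intro k
    rw [mul_comm]
    exact term_eq h r k
  rw [tsum_congr hterm, hswap]
  have : (∫ s in Set.Ioi a, ∑' k, g k s) = (1 / (2 * Real.pi)) *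
      ∫ s in Set.Ioi a, Real.exp (-s) * ∫ x in (0:ℝ)..r, Real.exp (-s * x ^ 2) := by
    rw [← integral_const_mul]
    refine setIntegral_congr_fun measurableSet_Ioi (fun s hs => hpt s hs)
  rw [this, hfub]
  rfl

end OwenAux

theorem OwenT_series_Q (h r : ℝ) :
    OwenT h r =
      (r / (2 * Real.pi * (1 + r ^ 2))) *
        ∑' k : ℕ, (evenDF k / oddDF k) *
          regGammaQ (k + 1) ((1 + r ^ 2) * h ^ 2 / 2) * (r ^ 2 / (1 + r ^ 2)) ^ k := by
  rcases lt_trichotomy r 0 with hr | hr | hr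
  · have hpos := OwenAux.main_pos h (-r) (by linarith)
    have hodd : OwenT h r = -OwenT h (-r) := by
      unfold OwenT
      have h1 : (∫ x in (0:ℝ)..(-r), Real.exp (-h ^ 2 * (1 + x ^ 2) / 2) / (1 + x ^ 2))
          = ∫ x in (0:ℝ)..(-r), Real.exp (-h ^ 2 * (1 + (-x) ^ 2) / 2) / (1 + (-x) ^ 2) := by
        refine intervalIntegral.integral_congr (fun x _ => ?_)
        rw [neg_sq]
      rw [h1, intervalIntegral.integral_comp_neg
        (fun x => Real.exp (-h ^ 2 * (1 + x ^ 2) / 2) / (1 + x ^ 2))]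
      rw [neg_zero, neg_neg, intervalIntegral.integral_symm]
      ring
    rw [hodd, hpos]
    have h2 : (-r) ^ 2 = r ^ 2 := by ring
    rw [h2]
    ring
  · subst hr
    unfold OwenT
    simp
  · exact OwenAux.main_pos h r hr
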